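/- Given a mechanical system (M, T₂, α) on a pseudo-Riemannian manifold, the corrected force form α̃ := α − (α̇/θ̇) θ, defined on the open set of TM where θ̇ ≠ 0, satisfies α̃̇ = 0, i.e. α̃ belongs to the contact system; hence the corrected mechanical system (M, T₂, α̃) is relativistic. -/

import Mathlib

/-- Relativistic correction.  Given a mechanical system
`(M, T₂, α)`, the corrected force form `α̃ := α − (α̇/θ̇) θ`, defined where
`θ̇ ≠ 0`, satisfies `α̃̇ = 0`, i.e. it belongs to the contact system; hence
`(M, T₂, α̃)` is relativistic.  Coordinates: `TM = ℝⁿ × ℝⁿ`; the metric is a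
field of symmetric bilinear forms `B`; `θ_p(u) = B_{p.1}(p.2, u.1)` with
`θ̇(p) = B_{p.1}(p.2, p.2)`; `α` is a horizontal 1-form with
`α̇(p) = α_p(p.2, 0)`; the corrected form is horizontal and its dot vanishes. -/
theorem stmt_10 {n : ℕ}
    (B : (Fin n → ℝ) → ((Fin n → ℝ) →L[ℝ] (Fin n → ℝ) →L[ℝ] ℝ))
    (hBsymm : ∀ x u w, B x u w = B x w u)
    (α : (Fin n → ℝ) × (Fin n → ℝ) → (((Fin n → ℝ) × (Fin n → ℝ)) →L[ℝ] ℝ))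
    (hαhor : ∀ p w, α p (0, w) = 0) :
    ∀ p : (Fin n → ℝ) × (Fin n → ℝ), B p.1 p.2 p.2 ≠ 0 →
      (∀ w : Fin n → ℝ,
          (α p - (α p (p.2, 0) / B p.1 p.2 p.2) •
              ((B p.1 p.2).comp
                (ContinuousLinearMap.fst ℝ (Fin n → ℝ) (Fin n → ℝ))))
            (0, w) = 0)
      ∧ (α p - (α p (p.2, 0) / B p.1 p.2 p.2) •
              ((B p.1 p.2).comp
                (ContinuousLinearMap.fst ℝ (Fin n → ℝ) (Fin n → ℝ))))
            (p.2, 0) = 0 := by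
  intro p hp
  constructor
  · intro w
    simp [hαhor p w, (B p.1 p.2).map_zero]
  · simp only [ContinuousLinearMap.sub_apply, ContinuousLinearMap.smul_apply,
      ContinuousLinearMap.comp_apply, ContinuousLinearMap.coe_fst', smul_eq_mul]
    field_simp
    ring
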